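/- arXiv:1106.0598 — 2 statements merged into one kernel-verified Lean document; each statement's English description precedes it below -/
import Mathlib

section
/- Let H : ℝ^{2m} → ℝ be continuously differentiable, let y₀, y₁ ∈ ℝ^{2m}, let c₁,…,c_k ∈ [0,1] and b₁,…,b_k ∈ ℝ, and suppose y₁ = y₀ + h·∑ᵢ bᵢ·J∇H((1-cᵢ)y₀ + cᵢy₁). If the quadrature formula with nodes cᵢ and weights bᵢ exactly integrates the function c ↦ (y₁-y₀)ᵀ∇H((1-c)y₀ + c y₁) on [0,1], then H(y₁) = H(y₀). -/
open RealInnerProductSpace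

/-- Energy conservation of the `k`-stage trapezoidal method, under exactness of the
quadrature formula on the line-integral integrand. -/
theorem stmt3 {m k : ℕ} (H : EuclideanSpace ℝ (Fin (2 * m)) → ℝ)
    (hH : ContDiff ℝ 1 H)
    (J : EuclideanSpace ℝ (Fin (2 * m)) →ₗ[ℝ] EuclideanSpace ℝ (Fin (2 * m)))
    (hJ : ∀ v w : EuclideanSpace ℝ (Fin (2 * m)), ⟪J v, w⟫ = - ⟪v, J w⟫)
    (y₀ y₁ : EuclideanSpace ℝ (Fin (2 * m))) (h : ℝ)
    (c b : Fin k → ℝ) (hc : ∀ i, c i ∈ Set.Icc (0:ℝ) 1)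
    (hmethod : y₁ = y₀ + h • ∑ i, b i • J (gradient H ((1 - c i) • y₀ + c i • y₁)))
    (hquad : ∫ t in (0:ℝ)..1, ⟪y₁ - y₀, gradient H ((1 - t) • y₀ + t • y₁)⟫
        = ∑ i, b i * ⟪y₁ - y₀, gradient H ((1 - c i) • y₀ + c i • y₁)⟫) :
    H y₁ = H y₀ := by
  set v := y₁ - y₀ with hv
  have hdiff := hH.differentiable one_ne_zero
  have grad_eq : ∀ p (w : EuclideanSpace ℝ (Fin (2 * m))),
      fderiv ℝ H p w = ⟪gradient H p, w⟫ := by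
    intro p w
    rw [gradient, ← InnerProductSpace.toDual_apply_apply, LinearIsometryEquiv.apply_symm_apply]
  have hγeq : ∀ t : ℝ, (1 - t) • y₀ + t • y₁ = y₀ + t • v := by
    intro t; rw [hv]; module
  have key : ∀ t : ℝ, HasDerivAt (fun t : ℝ => H ((1 - t) • y₀ + t • y₁))
      ⟪v, gradient H ((1 - t) • y₀ + t • y₁)⟫ t := by
    intro t
    have hγ : HasDerivAt (fun t : ℝ => (1 - t) • y₀ + t • y₁) v t := by
      have h1 : HasDerivAt (fun t : ℝ => y₀ + t • v) v t := by
        have := (hasDerivAt_id t).smul_const v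
        simpa using this.const_add y₀
      simpa only [← hγeq] using h1
    have hf := (hdiff ((1 - t) • y₀ + t • y₁)).hasFDerivAt
    have := hf.comp_hasDerivAt t hγ
    rw [grad_eq, real_inner_comm] at this
    exact this
  have hcontg : Continuous (gradient H) := by
    have hfd := hH.continuous_fderiv one_ne_zero
    exact ((InnerProductSpace.toDual ℝ _).symm.continuous.comp hfd : _)
  have hcont : Continuous fun t : ℝ => ⟪v, gradient H ((1 - t) • y₀ + t • y₁)⟫ := by
    apply Continuous.inner continuous_const
    exact hcontg.comp (((continuous_const.sub continuous_id).smul continuous_const).add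
      (continuous_id.smul continuous_const))
  have ftc : ∫ t in (0:ℝ)..1, ⟪v, gradient H ((1 - t) • y₀ + t • y₁)⟫
      = H ((1 - (1:ℝ)) • y₀ + (1:ℝ) • y₁) - H ((1 - (0:ℝ)) • y₀ + (0:ℝ) • y₁) := by
    exact intervalIntegral.integral_eq_sub_of_hasDerivAt (fun t _ => key t)
      (hcont.intervalIntegrable 0 1)
  simp only [sub_zero, sub_self, zero_smul, one_smul, add_zero, zero_add] at ftc
  -- the sum vanishes
  set G : EuclideanSpace ℝ (Fin (2 * m)) :=
    ∑ i, b i • gradient H ((1 - c i) • y₀ + c i • y₁) with hG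
  have hvG : v = h • J G := by
    rw [hv, hmethod, hG, map_sum]
    simp only [map_smul]
    abel
  have hsum : ∑ i, b i * ⟪v, gradient H ((1 - c i) • y₀ + c i • y₁)⟫ = ⟪v, G⟫ := by
    rw [hG, inner_sum]
    congr 1; ext i
    rw [real_inner_smul_right]
  have hJG : ⟪(J G : EuclideanSpace ℝ (Fin (2 * m))), G⟫ = 0 := by
    have h1 := hJ G G
    have h2 : ⟪G, (J G : EuclideanSpace ℝ (Fin (2 * m)))⟫
        = ⟪(J G : EuclideanSpace ℝ (Fin (2 * m))), G⟫ := real_inner_comm _ _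
    linarith [h1, h2]
  have hzero : ⟪v, G⟫ = 0 := by
    rw [hvG, real_inner_smul_left, hJG, mul_zero]
  have : H y₁ - H y₀ = 0 := by
    rw [← ftc, hquad, hsum, hzero]
  linarith
end

section
/- Let H : ℝ^{2m} → ℝ be continuously differentiable, y₀, y₁ ∈ ℝ^{2m}, and for z ∈ ℝ^{2m} let γ_z(τ) = y₀ + (z-y₀)τ + 2(z-2y₁+y₀)τ(τ-1), a(z) = ∫₀¹ ∇H(γ_z(τ)) dτ, and r(z) = -2(z-2y₁+y₀)ᵀ ∫₀¹ (2τ-1)∇H(γ_z(τ)) dτ. If z* satisfies z* = y₀ + 2hJ·a(z*) + (r(z*)/‖a(z*)‖²)·a(z*) with a(z*) ≠ 0, then H(z*) = H(y₀). -/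
open RealInnerProductSpace

/-- Any solution of the corrected two-step method's nonlinear equation conserves the energy. -/
theorem stmt7 {m : ℕ} (H : EuclideanSpace ℝ (Fin (2 * m)) → ℝ)
    (hH : ContDiff ℝ 1 H)
    (J : EuclideanSpace ℝ (Fin (2 * m)) →ₗ[ℝ] EuclideanSpace ℝ (Fin (2 * m)))
    (hJ : ∀ v w : EuclideanSpace ℝ (Fin (2 * m)), ⟪J v, w⟫ = - ⟪v, J w⟫)
    (h : ℝ) (hh : 0 < h) (y₀ y₁ zs : EuclideanSpace ℝ (Fin (2 * m)))
    (γ : EuclideanSpace ℝ (Fin (2 * m)) → ℝ → EuclideanSpace ℝ (Fin (2 * m)))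
    (hγ : ∀ z τ, γ z τ = y₀ + τ • (z - y₀)
        + (2 * τ * (τ - 1)) • (z - (2:ℝ) • y₁ + y₀))
    (a : EuclideanSpace ℝ (Fin (2 * m)) → EuclideanSpace ℝ (Fin (2 * m)))
    (ha : ∀ z, a z = ∫ τ in (0:ℝ)..1, gradient H (γ z τ))
    (r : EuclideanSpace ℝ (Fin (2 * m)) → ℝ)
    (hr : ∀ z, r z = -2 * ⟪z - (2:ℝ) • y₁ + y₀,
        ∫ τ in (0:ℝ)..1, (2 * τ - 1) • gradient H (γ z τ)⟫)
    (hne : a zs ≠ 0)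
    (hzs : zs = y₀ + (2 * h) • J (a zs) + (r zs / ‖a zs‖ ^ 2) • a zs) :
    H zs = H y₀ := by
  have hGcont : Continuous (gradient H) := by
    unfold gradient
    exact (LinearIsometryEquiv.continuous _).comp (hH.continuous_fderiv one_ne_zero)
  set G : EuclideanSpace ℝ (Fin (2 * m)) → EuclideanSpace ℝ (Fin (2 * m)) := gradient H
    with hG
  set w : EuclideanSpace ℝ (Fin (2 * m)) := zs - (2:ℝ) • y₁ + y₀ with hw
  set v : EuclideanSpace ℝ (Fin (2 * m)) := zs - y₀ with hv
  set c : ℝ → EuclideanSpace ℝ (Fin (2 * m)) :=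
    fun τ => y₀ + τ • v + (2 * τ * (τ - 1)) • w with hc
  have hγc : ∀ τ, γ zs τ = c τ := fun τ => by rw [hγ, hc]
  have hccont : Continuous c := by rw [hc]; fun_prop
  -- derivative of the curve
  have hcderiv : ∀ τ : ℝ, HasDerivAt c (v + (4 * τ - 2) • w) τ := by
    intro τ
    have h1 : HasDerivAt (fun τ : ℝ => τ • v) ((1:ℝ) • v) τ :=
      (hasDerivAt_id τ).smul_const v
    have h2 : HasDerivAt (fun τ : ℝ => 2 * τ * (τ - 1)) (4 * τ - 2) τ := by
      have := ((hasDerivAt_id τ).const_mul 2).mul ((hasDerivAt_id τ).sub_const 1)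
      simp only [id] at this
      exact this.congr_deriv (by ring)
    have h3 := h2.smul_const w
    have h4 := (h1.const_add y₀).add h3
    rw [one_smul] at h4
    exact h4
  -- derivative of H along the curve
  have hHderiv : ∀ τ : ℝ, HasDerivAt (fun τ => H (c τ))
      (⟪G (c τ), v + (4 * τ - 2) • w⟫) τ := by
    intro τ
    have hg : HasFDerivAt H (InnerProductSpace.toDual ℝ _ (G (c τ))) (c τ) :=
      ((hH.differentiable one_ne_zero) (c τ)).hasGradientAt.hasFDerivAt
    have := hg.comp_hasDerivAt τ (hcderiv τ)
    simp at this
    exact this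
  have hint1 : IntervalIntegrable (fun τ => G (c τ)) MeasureTheory.volume 0 1 :=
    (hGcont.comp hccont).intervalIntegrable 0 1
  have hint2 : IntervalIntegrable (fun τ => (2 * τ - 1) • G (c τ)) MeasureTheory.volume 0 1 :=
    (((continuous_const.mul continuous_id).sub continuous_const).smul
      (hGcont.comp hccont)).intervalIntegrable 0 1
  have hderivcont : Continuous (fun τ => ⟪G (c τ), v + (4 * τ - 2) • w⟫) :=
    (hGcont.comp hccont).inner (by fun_prop)
  have hFTC : (∫ τ in (0:ℝ)..1, ⟪G (c τ), v + (4 * τ - 2) • w⟫) = H (c 1) - H (c 0) :=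
    intervalIntegral.integral_eq_sub_of_hasDerivAt
      (fun τ _ => hHderiv τ) (hderivcont.intervalIntegrable 0 1)
  have hc1 : c 1 = zs := by rw [hc]; simp [hv]
  have hc0 : c 0 = y₀ := by rw [hc]; simp
  -- rewrite a and r in terms of c
  have ha' : a zs = ∫ τ in (0:ℝ)..1, G (c τ) := by rw [ha]; simp_rw [hγc]
  have hr' : r zs = -2 * ⟪w, ∫ τ in (0:ℝ)..1, (2 * τ - 1) • G (c τ)⟫ := by
    rw [hr]; simp_rw [hγc]; rfl
  -- split the integrand
  have hsplit : ∀ τ : ℝ, ⟪G (c τ), v + (4 * τ - 2) • w⟫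
      = ⟪v, G (c τ)⟫ + 2 * ⟪w, (2 * τ - 1) • G (c τ)⟫ := by
    intro τ
    simp only [inner_add_right, real_inner_smul_right]
    rw [real_inner_comm (G (c τ)) v, real_inner_comm (G (c τ)) w]
    ring
  have hintegral : (∫ τ in (0:ℝ)..1, ⟪G (c τ), v + (4 * τ - 2) • w⟫)
      = ⟪v, a zs⟫ + 2 * ⟪w, ∫ τ in (0:ℝ)..1, (2 * τ - 1) • G (c τ)⟫ := by
    simp_rw [hsplit]
    rw [intervalIntegral.integral_add]
    · congr 1
      · have := (innerSL ℝ v).intervalIntegral_comp_comm hint1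
        simp only [innerSL_apply_apply] at this
        rw [this, ha']
      · rw [intervalIntegral.integral_const_mul]
        have := (innerSL ℝ w).intervalIntegral_comp_comm hint2
        simp only [innerSL_apply_apply] at this
        rw [this]
    · exact ((continuous_const.inner (hGcont.comp hccont)).intervalIntegrable 0 1)
    · exact ((continuous_const.mul (continuous_const.inner (by fun_prop :
        Continuous fun τ : ℝ => (2 * τ - 1) • G (c τ)))).intervalIntegrable 0 1)
  have key : H zs - H y₀ = ⟪v, a zs⟫ - r zs := by
    rw [← hc1, ← hc0, ← hFTC, hintegral, hc1, hr']
    ring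
  have hJa : ⟪J (a zs), a zs⟫ = 0 := by
    have h1 := hJ (a zs) (a zs)
    have h2 := real_inner_comm (a zs) (J (a zs))
    linarith
  have hva : ⟪v, a zs⟫ = r zs := by
    have hvv : v = (2 * h) • J (a zs) + (r zs / ‖a zs‖ ^ 2) • a zs := by
      rw [hv]; nth_rewrite 1 [hzs]; abel
    rw [hvv, inner_add_left, real_inner_smul_left, real_inner_smul_left, hJa,
      real_inner_self_eq_norm_sq]
    have hnorm : ‖a zs‖ ^ 2 ≠ 0 := pow_ne_zero 2 (norm_ne_zero_iff.mpr hne)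
    field_simp
    ring
  linarith
end
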